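/- If ι : Ordinal → Ordinal is defined on an initial segment by ι(α·δ + γ) = ν + κ_α·δ + κ_γ for γ < α, where γ ↦ κ_γ is normal (strictly increasing and continuous) with κ_0 = 0 and κ_α additively indecomposable, then ι is continuous: for every limit ordinal λ in its domain, ι(λ) = sup of ι(λ') over λ' < λ. -/

import Mathlib

open Ordinal

/-- ι defined by ι(α·δ + γ) = ν + κ_α·δ + κ_γ on an initial segment is
continuous: at every limit ordinal in its domain, ι(λ) is the supremum of the
earlier values. -/
theorem stmt4 (κ : Ordinal → Ordinal) (α ν lamMax : Ordinal)
    (ι : Ordinal → Ordinal)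
    (hκ : Order.IsNormal κ) (h0 : κ 0 = 0)
    (hind : ∀ β γ : Ordinal, β < κ α → γ < κ α → β + γ < κ α)
    (heps : (omega0 : Ordinal) ^ α = α)
    (hν : ∃ ξ, ν = κ α * ξ)
    (hι : ∀ δ γ : Ordinal, γ < α → α * δ + γ ≤ lamMax →
      ι (α * δ + γ) = ν + κ α * δ + κ γ) :
    ∀ l ≤ lamMax, Order.IsSuccLimit l → ι l = ⨆ β : Set.Iio l, ι β.1 := by
  intro l hllam hlim
  have hα0 : α ≠ 0 := by
    rintro rfl
    simp at heps
  have hαpos : 0 < α := pos_iff_ne_zero.2 hα0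
  have hαlim : Order.IsSuccLimit α := heps ▸ isSuccLimit_opow_left isSuccLimit_omega0 hα0
  have hκα : 0 < κ α := by
    have := hκ.strictMono hαpos
    rwa [h0] at this
  -- monotonicity of ι on the domain
  have hmono : ∀ β β' : Ordinal, β ≤ β' → β' ≤ lamMax → ι β ≤ ι β' := by
    intro β β' hle hdom
    have hb : α * (β / α) + β % α = β := div_add_mod β α
    have hb' : α * (β' / α) + β' % α = β' := div_add_mod β' α
    have hm : β % α < α := mod_lt β hα0
    have hm' : β' % α < α := mod_lt β' hα0
    rw [← hb, ← hb', hι _ _ hm (hb.symm ▸ (hle.trans hdom)),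
      hι _ _ hm' (hb'.symm ▸ hdom)]
    rcases lt_or_ge (β / α) (β' / α) with hq | hq
    · have h1 : κ α * (β / α) + κ (β % α) ≤ κ α * (β' / α) := by
        calc κ α * (β / α) + κ (β % α) ≤ κ α * (β / α) + κ α :=
              add_le_add_right (hκ.strictMono.monotone hm.le) _
          _ = κ α * (β / α + 1) := by rw [mul_add_one]
          _ ≤ κ α * (β' / α) := mul_le_mul_right (Order.add_one_le_of_lt hq) _
      calc ν + κ α * (β / α) + κ (β % α)
          = ν + (κ α * (β / α) + κ (β % α)) := by rw [add_assoc]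
        _ ≤ ν + κ α * (β' / α) := add_le_add_right h1 _
        _ ≤ ν + κ α * (β' / α) + κ (β' % α) := le_self_add
    · have hq' : β / α = β' / α := by
        apply le_antisymm _ hq
        by_contra h
        push_neg at h
        have : β' < β := by
          calc β' = α * (β' / α) + β' % α := hb'.symm
            _ < α * (β' / α) + α := add_lt_add_right hm' _
            _ = α * (β' / α + 1) := by rw [mul_add_one]
            _ ≤ α * (β / α) := mul_le_mul_right (Order.add_one_le_of_lt h) _
            _ ≤ α * (β / α) + β % α := le_self_add
            _ = β := hb
        exact absurd hle this.not_ge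
      rw [hq']
      have hg : β % α ≤ β' % α := by
        have h2 : α * (β' / α) + β % α ≤ α * (β' / α) + β' % α := by
          rw [hb']
          rw [hq'] at hb
          rw [hb]
          exact hle
        exact (add_le_add_iff_left _).1 h2
      exact add_le_add_right (hκ.strictMono.monotone hg) _
  have hub : ∀ β : Set.Iio l, ι β.1 ≤ ι l := fun β => hmono _ _ β.2.le hllam
  refine le_antisymm ?_ (Ordinal.iSup_le hub)
  set δ := l / α with hδ
  set γ := l % α with hγ
  have hl : α * δ + γ = l := div_add_mod l α
  have hγα : γ < α := mod_lt l hα0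
  have key : ∀ β < l, ι β ≤ ⨆ b : Set.Iio l, ι b.1 := by
    intro β hβ
    exact Ordinal.le_iSup (fun b : Set.Iio l => ι b.1) ⟨β, hβ⟩
  have hιl : ι l = ν + κ α * δ + κ γ := by
    conv_lhs => rw [← hl]
    exact hι δ γ hγα (hl.symm ▸ hllam)
  rw [hιl]
  rcases zero_or_succ_or_isSuccLimit γ with hz | ⟨s, hs⟩ | hγlim
  · -- γ = 0
    rw [hz, h0, add_zero]
    rcases zero_or_succ_or_isSuccLimit δ with hz' | ⟨d, hd⟩ | hδlim
    · exfalso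
      rw [hz', mul_zero] at hl
      rw [hz, add_zero] at hl
      exact hlim.pos.ne' hl.symm
    · -- δ = d + 1
      have hld : l = α * d + α := by
        rw [← hl, hz, add_zero, ← hd, mul_succ]
      have hnorm : Order.IsNormal (fun x => ν + κ α * d + κ x) :=
        (isNormal_add_right (ν + κ α * d)).comp hκ
      have heq : ν + κ α * δ = (fun x => ν + κ α * d + κ x) α := by
        simp only [← hd, mul_succ, add_assoc]
      rw [heq, hnorm.le_iff_forall_le hαlim]
      intro g hg
      have hglt : α * d + g < l := by rw [hld]; exact add_lt_add_right hg _
      have hval := hι d g hg (hglt.le.trans hllam)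
      show ν + κ α * d + κ g ≤ _
      rw [← hval]
      exact key _ hglt
    · -- δ limit
      have hnorm : Order.IsNormal (fun x => ν + κ α * x) :=
        (isNormal_add_right ν).comp (isNormal_mul_right hκα)
      rw [show ν + κ α * δ = (fun x => ν + κ α * x) δ from rfl,
        hnorm.le_iff_forall_le hδlim]
      intro d hd
      have hglt : α * d < l := by
        rw [← hl, hz, add_zero]
        exact (isNormal_mul_right hαpos).strictMono hd
      have hval := hι d 0 hαpos (by rw [add_zero]; exact hglt.le.trans hllam)
      rw [add_zero, h0, add_zero] at hval
      show ν + κ α * d ≤ _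
      rw [← hval]
      exact key _ hglt
  · -- γ successor: impossible since l is a limit
    exfalso
    have hsucc : l = Order.succ (α * δ + s) := by
      rw [← hl, ← hs, add_succ]
    have h1 : α * δ + s < l := by rw [hsucc]; exact Order.lt_succ _
    have h2 := hlim.succ_lt h1
    rw [← hsucc] at h2
    exact lt_irrefl _ h2
  · -- γ limit
    have hnorm : Order.IsNormal (fun x => ν + κ α * δ + κ x) :=
      (isNormal_add_right (ν + κ α * δ)).comp hκ
    rw [show ν + κ α * δ + κ γ = (fun x => ν + κ α * δ + κ x) γ from rfl,
      hnorm.le_iff_forall_le hγlim]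
    intro g hg
    have hglt : α * δ + g < l := by rw [← hl]; exact add_lt_add_right hg _
    have hval := hι δ g (hg.trans hγα) (hglt.le.trans hllam)
    show ν + κ α * δ + κ g ≤ _
    rw [← hval]
    exact key _ hglt
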